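/- arXiv:1612.07606 — 2 statements merged into one kernel-verified Lean document; each statement's English description precedes it below -/
import Mathlib

section
/- Let (R, m) be a Noetherian local ring, I ⊂ R an ideal, and x ∈ m an element such that for all n ≥ 0 the union ∪_{s>0}(I^{n+1} : m^s) equals I^{n+1} : x. Suppose moreover that I^{n+1} : x = I^n(I : x) + (0 :_R x) for all n ≥ 0. If x is a regular element of R, then setting I_n = I^n : x, we have I_n · I_m = I_{n+m} for all n, m > 0 and I_n = (I_1)^n for all n ≥ 1. -/
open IsLocalRing in
/-- with `I_n = I^n : x`, the hypotheses give `I_n I_m = I_{n+m}` and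
`I_n = I_1^n`. -/
theorem saturation_powers_multiplicative
    (R : Type*) [CommRing R] [IsNoetherianRing R] [IsLocalRing R]
    (I : Ideal R) (x : R) (hxm : x ∈ maximalIdeal R)
    (hreg : x ∈ nonZeroDivisors R)
    (hsat : ∀ n : ℕ,
      (⨆ s : ℕ, (I ^ (n + 1)).colon ((maximalIdeal R ^ (s + 1) : Ideal R))) =
        (I ^ (n + 1)).colon (Ideal.span {x}))
    (hcolon : ∀ n : ℕ,
      (I ^ (n + 1)).colon (Ideal.span {x}) =
        I ^ n * (I.colon (Ideal.span {x})) + (⊥ : Ideal R).colon (Ideal.span {x})) :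
    (∀ n m : ℕ, 0 < n → 0 < m →
        ((I ^ n).colon (Ideal.span {x})) * ((I ^ m).colon (Ideal.span {x})) =
          (I ^ (n + m)).colon (Ideal.span {x})) ∧
      ∀ n : ℕ, 1 ≤ n →
        (I ^ n).colon (Ideal.span {x}) = ((I ^ 1).colon (Ideal.span {x})) ^ n := by
  set S : Ideal R := Ideal.span {x} with hS
  -- annihilator of x is trivial
  have hbot : (⊥ : Ideal R).colon S = ⊥ := by
    ext r
    simp only [hS, Ideal.mem_colon_span_singleton, Ideal.mem_bot]
    exact ⟨fun h => hreg.2 r h, fun h => by simp [h]⟩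
  have hc : ∀ n : ℕ, (I ^ (n + 1)).colon S = I ^ n * (I.colon S) := by
    intro n
    rw [hcolon n, hbot]; exact sup_bot_eq _
  -- saturation lemma: (I^(n+1) : x) : x = I^(n+1) : x
  have hsatx : ∀ (n : ℕ) (r : R), r * x ∈ (I ^ (n + 1)).colon S →
      r ∈ (I ^ (n + 1)).colon S := by
    intro n r hr
    set J := I ^ (n + 1) with hJ
    set f : ℕ →o Ideal R :=
      ⟨fun s => J.colon ((maximalIdeal R ^ (s + 1) : Ideal R)),
        fun s t hst => Submodule.colon_mono le_rfl
          (Ideal.pow_le_pow_right (by omega))⟩ with hf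
    obtain ⟨N, hN⟩ := monotone_stabilizes_iff_noetherian.mpr
      (inferInstance : IsNoetherian R R) f
    have hsup : (⨆ s : ℕ, J.colon ((maximalIdeal R ^ (s + 1) : Ideal R))) = f N := by
      refine le_antisymm (iSup_le fun s => ?_) (le_iSup (fun s => f s) N)
      rcases le_total s N with h | h
      · exact f.monotone h
      · exact (hN s h).ge
    have hfN : f N = J.colon S := by rw [← hsup, hsat n]
    -- r * x ∈ J.colon S = J.colon m^(N+1)
    have h1 : r * x ∈ J.colon ((maximalIdeal R ^ (N + 1) : Ideal R)) := by
      rw [← hfN] at hr; exact hr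
    -- hence r ∈ J.colon (m^(N+1) * m^(N+1)) after passing through J : x
    have h2 : r ∈ J.colon ((maximalIdeal R ^ (2 * N + 2) : Ideal R)) := by
      rw [Submodule.mem_colon]
      intro p hp
      have h22 : (2 : ℕ) * N + 2 = (N + 1) + (N + 1) := by ring
      rw [h22, pow_add] at hp
      refine Submodule.mul_induction_on hp (fun a ha b hb => ?_)
        (fun y z hy hz => by simpa [mul_add] using add_mem hy hz)
      have hra : r * a ∈ J.colon S := by
        rw [hS, Ideal.mem_colon_span_singleton]
        have := Submodule.mem_colon.mp h1 a ha
        simpa [smul_eq_mul, mul_comm, mul_assoc, mul_left_comm] using this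
      rw [← hfN] at hra
      have := Submodule.mem_colon.mp hra b hb
      simpa [smul_eq_mul, mul_comm, mul_assoc, mul_left_comm] using this
    have h3 : r ∈ f (2 * N + 1) := h2
    rw [← hN (2 * N + 1) (by omega), hfN] at h3
    exact h3
  -- (I:x)^2 = I * (I:x)
  have hI1 : I ≤ I.colon S := fun a ha => by
    rw [hS, Ideal.mem_colon_span_singleton]; exact Ideal.mul_mem_right x I ha
  have hsq : (I.colon S) * (I.colon S) = I * (I.colon S) := by
    refine le_antisymm (Ideal.mul_le.mpr fun a ha b hb => ?_)
      (Ideal.mul_mono_left hI1)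
    have hc1 := hc 1
    rw [pow_one] at hc1
    rw [← hc1]
    apply hsatx 1
    rw [hS, Ideal.mem_colon_span_singleton]
    have : a * b * x * x = (a * x) * (b * x) := by ring
    rw [this]
    rw [show I ^ (1 + 1) = I * I from by rw [pow_succ, pow_one]]
    exact Ideal.mul_mem_mul (Ideal.mem_colon_span_singleton.mp ha)
      (Ideal.mem_colon_span_singleton.mp hb)
  -- key: (I^(n+1)) : x = (I : x)^(n+1)
  have key : ∀ n : ℕ, (I ^ (n + 1)).colon S = (I.colon S) ^ (n + 1) := by
    intro n
    induction n with
    | zero => rw [hc 0, pow_zero, one_mul, pow_one]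
    | succ k ih =>
      rw [hc (k + 1)]
      conv_rhs => rw [pow_succ, ← ih, hc k]
      rw [mul_assoc, hsq, ← mul_assoc, ← pow_succ]
  have key' : ∀ n : ℕ, 1 ≤ n → (I ^ n).colon S = (I.colon S) ^ n := by
    intro n hn
    obtain ⟨k, rfl⟩ := Nat.exists_eq_add_of_le hn
    rw [add_comm]
    exact key k
  have hone : (I ^ 1).colon S = I.colon S := by rw [pow_one]
  constructor
  · intro n m hn hm
    rw [key' n hn, key' m hm, key' (n + m) (by omega), pow_add]
  · intro n hn
    rw [key' n hn, hone]
end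

section
/- Let (R, m) be a Noetherian local ring, I ⊆ R an ideal, and x ∈ m such that x is a regular element of R and (I^{n+1} : x) = I^n(I : x) + (0 :_R x) for all n ≥ 0 and also ∪_{s>0}(I^{n+1} : m^s) = I^{n+1} : x for all n ≥ 0. Then ℓ_R(H^0_m(R/I^{n+1})) = ℓ_R((I:x)^{n+1}/I^{n+1}) for all n ≥ 0. -/
open IsLocalRing

/-- The zeroth local cohomology `H^0_I(M) = ⋃_{s>0} (0 :_M I^s)`, as a submodule. -/
def H0 {R : Type*} [CommRing R] (I : Ideal R) (M : Type*) [AddCommGroup M]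
    [Module R M] : Submodule R M :=
  ⨆ s : ℕ, Submodule.torsionBySet R M ((I ^ (s + 1) : Ideal R) : Set R)

/-- The length of a module, as the Krull dimension of its lattice of submodules. -/
noncomputable def moduleLength (R : Type*) [CommRing R] (M : Type*) [AddCommGroup M]
    [Module R M] : ℕ∞ :=
  (Order.krullDim (Submodule R M)).unbotD 0

open Submodule in
theorem satx_colon (R : Type*) [CommRing R] [IsNoetherianRing R] [IsLocalRing R]
    (x : R) (K : Ideal R)
    (hsat : (⨆ s : ℕ, K.colon ((maximalIdeal R ^ (s + 1) : Ideal R))) =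
        K.colon (Ideal.span {x})) :
    ∀ y : R, y * x ∈ K.colon (Ideal.span {x}) → y ∈ K.colon (Ideal.span {x}) := by
  set f : ℕ → Ideal R := fun s : ℕ => K.colon ((maximalIdeal R ^ (s + 1) : Ideal R)) with hf
  have mono : Monotone f := by
    intro a b hab
    exact Submodule.colon_mono le_rfl (Ideal.pow_le_pow_right (by omega))
  obtain ⟨t, ht⟩ := monotone_stabilizes_iff_noetherian.mpr (inferInstance : IsNoetherian R R)
    ⟨f, mono⟩
  have hstab : (⨆ s : ℕ, f s) = f t := by
    apply le_antisymm
    · apply iSup_le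
      intro s
      rcases le_total s t with h | h
      · exact mono h
      · exact le_of_eq (ht s h).symm
    · exact le_iSup f t
  intro y hy
  rw [← hsat, hstab] at hy
  have h1 : ∀ p ∈ (maximalIdeal R) ^ (t + 1), y * p ∈ K.colon (Ideal.span {x}) := by
    intro p hp
    rw [Ideal.mem_colon_span_singleton]
    have := (Submodule.mem_colon.mp hy) p hp
    rw [smul_eq_mul] at this
    convert this using 1; ring
  have h2 : ∀ p ∈ (maximalIdeal R) ^ (t + 1), y * p ∈ f t := by
    intro p hp
    rw [← hstab, hsat]
    exact h1 p hp
  have h3 : y ∈ K.colon ((maximalIdeal R ^ (t + 1)) * (maximalIdeal R ^ (t + 1))) := by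
    rw [Submodule.mem_colon]
    intro z hz
    refine Submodule.mul_induction_on hz (fun a ha b hb => ?_) (fun a b h1' h2' => ?_)
    · have := (Submodule.mem_colon.mp (h2 a ha)) b hb
      rw [smul_eq_mul] at this ⊢
      convert this using 1; ring
    · rw [smul_add]; exact K.add_mem h1' h2'
  have h4 : y ∈ f (2 * t + 1) := by
    have : (maximalIdeal R) ^ (2 * t + 1 + 1) = (maximalIdeal R ^ (t + 1)) * (maximalIdeal R ^ (t + 1)) := by
      rw [← pow_add]; ring_nf
    rw [hf]
    simp only
    rw [this]
    exact h3
  rw [← hsat]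
  exact le_iSup f (2 * t + 1) h4

open Submodule in
theorem pow_colon_eq (R : Type*) [CommRing R] [IsNoetherianRing R] [IsLocalRing R]
    (I : Ideal R) (x : R) (hreg : x ∈ nonZeroDivisors R)
    (hcolon : ∀ n : ℕ,
      (I ^ (n + 1)).colon (Ideal.span {x}) =
        I ^ n * (I.colon (Ideal.span {x})) + (⊥ : Ideal R).colon (Ideal.span {x}))
    (hsat : ∀ n : ℕ,
      (⨆ s : ℕ, (I ^ (n + 1)).colon ((maximalIdeal R ^ (s + 1) : Ideal R))) =
        (I ^ (n + 1)).colon (Ideal.span {x})) :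
    ∀ n : ℕ, (I.colon (Ideal.span {x})) ^ (n + 1) = (I ^ (n + 1)).colon (Ideal.span {x}) := by
  set J := I.colon (Ideal.span {x}) with hJ
  have hbot : ((⊥ : Ideal R).colon (Ideal.span {x})) = ⊥ := by
    ext a
    simp only [Ideal.mem_colon_span_singleton, Ideal.mem_bot]
    exact ⟨fun h => hreg.2 a h, fun h => by rw [h, zero_mul]⟩
  have hcolon' : ∀ n : ℕ, (I ^ (n + 1)).colon (Ideal.span {x}) = I ^ n * J := by
    intro n; rw [hcolon n, hbot]; exact sup_bot_eq _
  intro n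
  induction n with
  | zero => rw [pow_one, pow_one, hJ]
  | succ n ih =>
    apply le_antisymm
    · -- J^(n+2) = J^(n+1) * J ⊆ (I^(n+2) : x)
      rw [pow_succ, ih]
      rw [Ideal.mul_le]
      intro a ha b hb
      apply satx_colon R x (I ^ (n + 1 + 1)) (hsat (n + 1))
      rw [Ideal.mem_colon_span_singleton]
      have hax : a * x ∈ I ^ (n + 1) := Ideal.mem_colon_span_singleton.mp ha
      have hbx : b * x ∈ I := Ideal.mem_colon_span_singleton.mp hb
      have : (a * x) * (b * x) ∈ I ^ (n + 1) * I := Ideal.mul_mem_mul hax hbx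
      rw [← pow_succ] at this
      convert this using 1; ring
    · rw [hcolon' (n + 1), pow_succ]
      apply Ideal.mul_mono_left
      calc I ^ (n + 1) ≤ (I ^ (n + 1)).colon (Ideal.span {x}) := by
            intro a ha
            exact Ideal.mem_colon_span_singleton.mpr (Ideal.mul_mem_right x _ ha)
        _ = J ^ (n + 1) := ih.symm

open Submodule in
theorem H0_eq_map {R : Type*} [CommRing R] (m K : Ideal R) :
    H0 m (R ⧸ K) = Submodule.map K.mkQ (⨆ s : ℕ, K.colon ((m ^ (s + 1) : Ideal R))) := by
  rw [H0, Submodule.map_iSup]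
  congr 1
  funext s
  ext y
  obtain ⟨r, rfl⟩ := Submodule.mkQ_surjective K y
  rw [Submodule.mem_torsionBySet_iff]
  constructor
  · intro h
    refine ⟨r, ?_, rfl⟩
    rw [SetLike.mem_coe, Submodule.mem_colon]
    intro p hp
    have := h ⟨p, hp⟩
    simp only at this
    rw [smul_eq_mul, mul_comm]
    rw [← map_smul, smul_eq_mul] at this
    exact (Submodule.Quotient.mk_eq_zero K).mp this
  · rintro ⟨r', hr', hrr⟩ a
    rw [SetLike.mem_coe] at hr'
    have hk : (a : R) * r' ∈ K := by
      have := Submodule.mem_colon.mp hr' a a.2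
      rwa [smul_eq_mul, mul_comm] at this
    calc (a : R) • K.mkQ r = K.mkQ ((a : R) • r') := by
          rw [← hrr, map_smul]
      _ = 0 := by
          rw [smul_eq_mul]
          exact (Submodule.Quotient.mk_eq_zero K).mpr hk

open Submodule in
theorem moduleLength_eq_of_equiv {R : Type*} [CommRing R] {M N : Type*} [AddCommGroup M]
    [Module R M] [AddCommGroup N] [Module R N] (e : M ≃ₗ[R] N) :
    moduleLength R M = moduleLength R N :=
  congrArg (fun d => d.unbotD 0) (Order.krullDim_eq_of_orderIso (Submodule.orderIsoMapComap e))

/-- under the saturation hypotheses,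
`ℓ_R(H^0_m(R/I^(n+1))) = ℓ_R((I:x)^(n+1)/I^(n+1))` for all `n ≥ 0`. -/
theorem length_H0_eq_length_rees
    (R : Type*) [CommRing R] [IsNoetherianRing R] [IsLocalRing R]
    (I : Ideal R) (x : R) (hxm : x ∈ maximalIdeal R) (hreg : x ∈ nonZeroDivisors R)
    (hcolon : ∀ n : ℕ,
      (I ^ (n + 1)).colon (Ideal.span {x}) =
        I ^ n * (I.colon (Ideal.span {x})) + (⊥ : Ideal R).colon (Ideal.span {x}))
    (hsat : ∀ n : ℕ,
      (⨆ s : ℕ, (I ^ (n + 1)).colon ((maximalIdeal R ^ (s + 1) : Ideal R))) =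
        (I ^ (n + 1)).colon (Ideal.span {x})) :
    ∀ n : ℕ,
      moduleLength R (H0 (maximalIdeal R) (R ⧸ I ^ (n + 1))) =
        moduleLength R
          (↥((I.colon (Ideal.span {x})) ^ (n + 1)) ⧸
            (Submodule.comap ((I.colon (Ideal.span {x})) ^ (n + 1) :
              Submodule R R).subtype (I ^ (n + 1)))) := by
  intro n
  set J : Ideal R := I.colon (Ideal.span {x}) with hJ
  set K : Ideal R := I ^ (n + 1) with hK
  have hJK : J ^ (n + 1) = K.colon (Ideal.span {x}) :=
    pow_colon_eq R I x hreg hcolon hsat n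
  have hH0 : H0 (maximalIdeal R) (R ⧸ K) = Submodule.map K.mkQ (J ^ (n + 1) : Ideal R) := by
    rw [H0_eq_map, hsat n, ← hJK]
  set f : (J ^ (n + 1) : Ideal R) →ₗ[R] R ⧸ K :=
    K.mkQ ∘ₗ (J ^ (n + 1) : Submodule R R).subtype with hfdef
  have hker : LinearMap.ker f = Submodule.comap ((J ^ (n + 1) : Ideal R) :
      Submodule R R).subtype K := by
    rw [hfdef, LinearMap.ker_comp, Submodule.ker_mkQ]
  have hrange : LinearMap.range f = Submodule.map K.mkQ (J ^ (n + 1) : Ideal R) := by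
    rw [hfdef, LinearMap.range_comp, Submodule.range_subtype]
  rw [hH0, ← hrange, ← hker]
  exact (moduleLength_eq_of_equiv f.quotKerEquivRange).symm
end
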